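/- Let A be an almost Kähler–Poisson algebra with curvature tensor R. Then for all X, Y, Z, V ∈ X(A) the Bianchi identities hold: R(X,Y,Z) + R(Z,X,Y) + R(Y,Z,X) = 0, and (∇_X R)(Y,Z,V) + (∇_Y R)(Z,X,V) + (∇_Z R)(X,Y,V) = 0. -/

import Mathlib

open scoped BigOperators

namespace KPA

/-- The field of fractions of the polynomial ring `ℂ[x¹,…,xᵐ]`. -/
abbrev A (m : ℕ) := FractionRing (MvPolynomial (Fin m) ℂ)

/-- The generators `x^i` of `A m`. -/
noncomputable def Xg {m : ℕ} (i : Fin m) : A m :=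
  algebraMap (MvPolynomial (Fin m) ℂ) (A m) (MvPolynomial.X i)

/-- The image of a complex constant in `A m`. -/
noncomputable def cC {m : ℕ} (z : ℂ) : A m :=
  algebraMap (MvPolynomial (Fin m) ℂ) (A m) (MvPolynomial.C z)

/-- An almost Kähler–Poisson algebra: the field of fractions `A m` of `ℂ[x¹,…,xᵐ]`,
equipped with a ∗-structure `st` fixing the generators, a Poisson bracket `br`
compatible with ∗, and an invertible hermitian element `γ2` such that
`P^i_k P^k_l P^l_j = -γ² P^i_j` where `P^{ij} = {x^i, x^j}`. -/
structure AKP (m : ℕ) where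
  br : A m → A m → A m
  st : A m → A m
  br_add_left : ∀ a b c, br (a + b) c = br a c + br b c
  br_antisymm : ∀ a b, br a b = - br b a
  br_leibniz : ∀ a b c, br a (b * c) = br a b * c + b * br a c
  br_jacobi : ∀ a b c, br a (br b c) + br b (br c a) + br c (br a b) = 0
  br_const : ∀ (z : ℂ) (a : A m), br (cC z) a = 0
  st_add : ∀ a b, st (a + b) = st a + st b
  st_mul : ∀ a b, st (a * b) = st a * st b
  st_invol : ∀ a, st (st a) = a
  st_const : ∀ z : ℂ, st (cC z) = cC (starRingEnd ℂ z)
  st_x : ∀ i, st (Xg i) = Xg i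
  st_br : ∀ a b, st (br a b) = br (st a) (st b)
  γ2 : A m
  γ2_ne : γ2 ≠ 0
  γ2_herm : st γ2 = γ2
  akp : ∀ i j, (∑ k, ∑ l, br (Xg i) (Xg k) * br (Xg k) (Xg l) * br (Xg l) (Xg j))
      = - γ2 * br (Xg i) (Xg j)

namespace AKP

variable {m : ℕ} (S : AKP m)

/-- `P^{ij} = {x^i, x^j}`. -/
noncomputable def P (i j : Fin m) : A m := S.br (Xg i) (Xg j)

/-- `D^i(u) = γ^{-2} {u, x^k} P^i_k`. -/
noncomputable def D (u : A m) (i : Fin m) : A m := S.γ2⁻¹ * ∑ k, S.br u (Xg k) * S.P i k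

/-- `D^{ik} = D^i(x^k)`. -/
noncomputable def Dm (i k : Fin m) : A m := S.D (Xg k) i

/-- Membership in the tangent space `X(A) = {D(X) : X ∈ Der(A)}` (in components). -/
def tang (T : Fin m → A m) : Prop := ∃ V : Fin m → A m, ∀ i, T i = ∑ k, S.Dm i k * V k

/-- The tangent space `X(A)` as a submodule of `A^m` : the range of the projection `D`. -/
noncomputable def tSp : Submodule (A m) (Fin m → A m) :=
  LinearMap.range (Matrix.mulVecLin (Matrix.of fun i k => S.Dm i k))

/-- Action `X(u) = X^i D_i(u)` of a tangent vector on an element. -/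
noncomputable def act (X : Fin m → A m) (u : A m) : A m := ∑ i, X i * S.D u i

/-- The covariant derivative `∇_X Y = D^{ik} X^l D_l(Y_k) ∂_i` (in components). -/
noncomputable def nab (X Y : Fin m → A m) (i : Fin m) : A m :=
  ∑ k, S.Dm i k * ∑ l, X l * S.D (Y k) l

/-- The commutator `[X,Y]^i = X(Y^i) - Y(X^i)`. -/
noncomputable def lie (X Y : Fin m → A m) (i : Fin m) : A m := S.act X (Y i) - S.act Y (X i)

/-- The curvature `R(X,Y)Z = ∇_X ∇_Y Z - ∇_Y ∇_X Z - ∇_{[X,Y]} Z`. -/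
noncomputable def curv (X Y Z : Fin m → A m) (i : Fin m) : A m :=
  S.nab X (S.nab Y Z) i - S.nab Y (S.nab X Z) i - S.nab (S.lie X Y) Z i

/-- The bilinear form `(X,Y) = X^i Y_i`. -/
noncomputable def ipa (_S : AKP m) (X Y : Fin m → A m) : A m := ∑ i, X i * Y i

/-- `R(X,Y,Z,V) = (R(Z,V)Y, X)`. -/
noncomputable def Rq (X Y Z V : Fin m → A m) : A m := S.ipa (S.curv Z V Y) X

/-- `(∇_X R)(Y,Z,V)`, the covariant derivative of the curvature tensor. -/
noncomputable def nabR (X Y Z V : Fin m → A m) (i : Fin m) : A m :=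
  S.nab X (S.curv Y Z V) i - S.curv (S.nab X Y) Z V i
    - S.curv Y (S.nab X Z) V i - S.curv Y Z (S.nab X V) i

/-- `Π^{ij} = δ^{ij} - D^{ij}`. -/
noncomputable def Pim (i j : Fin m) : A m := (if i = j then 1 else 0) - S.Dm i j

/-- The positivity preorder: `a ≥ 0` iff `a = (∑ uᵢ* uᵢ)/(∑ vₖ* vₖ)`. -/
def pos (a : A m) : Prop :=
  ∃ (N N' : ℕ) (u : Fin N → A m) (v : Fin N' → A m),
    a = (∑ i, S.st (u i) * u i) / (∑ k, S.st (v k) * v k)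

end AKP
end KPA
namespace KPA
namespace AKP

variable {m : ℕ} (S : AKP m)

/-! ### Basic bracket lemmas -/

lemma br_zero_left (a : A m) : S.br 0 a = 0 := by
  have h := S.br_add_left 0 0 a
  rw [add_zero] at h
  linear_combination -h

lemma br_zero_right (a : A m) : S.br a 0 = 0 := by
  rw [S.br_antisymm, S.br_zero_left, neg_zero]

lemma br_add_right (a b c : A m) : S.br a (b + c) = S.br a b + S.br a c := by
  rw [S.br_antisymm, S.br_add_left, S.br_antisymm b a, S.br_antisymm c a]
  ring

lemma br_neg_left (a b : A m) : S.br (-a) b = - S.br a b := by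
  have h := S.br_add_left a (-a) b
  rw [add_neg_cancel, S.br_zero_left] at h
  linear_combination -h

lemma br_neg_right (a b : A m) : S.br a (-b) = - S.br a b := by
  rw [S.br_antisymm, S.br_neg_left, S.br_antisymm b a]; ring

lemma br_sub_left (a b c : A m) : S.br (a - b) c = S.br a c - S.br b c := by
  rw [sub_eq_add_neg, S.br_add_left, S.br_neg_left, sub_eq_add_neg]

lemma br_sub_right (a b c : A m) : S.br a (b - c) = S.br a b - S.br a c := by
  rw [S.br_antisymm, S.br_sub_left, S.br_antisymm b a, S.br_antisymm c a]
  ring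

lemma br_leibniz_left (a b c : A m) : S.br (a * b) c = S.br a c * b + a * S.br b c := by
  rw [S.br_antisymm, S.br_leibniz, S.br_antisymm a c, S.br_antisymm b c]
  ring

lemma br_const_right (a : A m) (z : ℂ) : S.br a (cC z) = 0 := by
  rw [S.br_antisymm, S.br_const, neg_zero]

lemma br_sum_right {ι : Type*} (a : A m) (s : Finset ι) (f : ι → A m) :
    S.br a (∑ x ∈ s, f x) = ∑ x ∈ s, S.br a (f x) := by
  classical
  induction s using Finset.induction_on with
  | empty => simp [S.br_zero_right]
  | insert _ _ h ih => rw [Finset.sum_insert h, Finset.sum_insert h, S.br_add_right, ih]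

/-- Jacobi identity in the convenient form `{a,{b,c}} - {b,{a,c}} = {{a,b},c}`. -/
lemma br_jacobi' (a b c : A m) :
    S.br a (S.br b c) - S.br b (S.br a c) = S.br (S.br a b) c := by
  have h := S.br_jacobi a b c
  rw [S.br_antisymm c a, S.br_neg_right] at h
  rw [S.br_antisymm (S.br a b) c]
  linear_combination h

end AKP
end KPA
namespace KPA
namespace AKP

variable {m : ℕ} (S : AKP m)

lemma P_antisymm (a b : Fin m) : S.P a b = - S.P b a := S.br_antisymm _ _

lemma Dm_eq (i k : Fin m) : S.Dm i k = S.γ2⁻¹ * ∑ t, S.P k t * S.P i t := rfl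

/-- The key contraction identity `∑ₚ D^{qp} P^{jp} = P^{jq}`, i.e. the columns of
`P` are fixed by the projection `D`.  Follows from the almost Kähler condition. -/
lemma G_lemma (j q : Fin m) : ∑ p, S.Dm q p * S.P j p = S.P j q := by
  have key : ∑ p, ∑ t, S.P j p * S.P p t * S.P t q = - S.γ2 * S.P j q := S.akp j q
  calc ∑ p, S.Dm q p * S.P j p
      = ∑ p, ∑ t, S.γ2⁻¹ * -(S.P j p * S.P p t * S.P t q) := by
        refine Finset.sum_congr rfl fun p _ => ?_
        rw [S.Dm_eq, Finset.mul_sum, Finset.sum_mul]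
        refine Finset.sum_congr rfl fun t _ => ?_
        rw [S.P_antisymm q t]
        ring
    _ = S.γ2⁻¹ * ∑ p, ∑ t, -(S.P j p * S.P p t * S.P t q) := by
        rw [Finset.mul_sum]
        exact Finset.sum_congr rfl fun p _ => (Finset.mul_sum _ _ _).symm
    _ = S.γ2⁻¹ * (S.γ2 * S.P j q) := by
        congr 1
        calc ∑ p, ∑ t, -(S.P j p * S.P p t * S.P t q)
            = -∑ p, ∑ t, S.P j p * S.P p t * S.P t q :=
              (Finset.sum_congr rfl fun p _ => Finset.sum_neg_distrib _).trans
                (Finset.sum_neg_distrib _)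
          _ = S.γ2 * S.P j q := by rw [key]; ring
    _ = S.P j q := by rw [← mul_assoc, inv_mul_cancel₀ S.γ2_ne, one_mul]

lemma Dm_symm (i k : Fin m) : S.Dm i k = S.Dm k i := by
  rw [S.Dm_eq, S.Dm_eq]
  congr 1
  exact Finset.sum_congr rfl fun t _ => mul_comm _ _

lemma Dm_col (i p : Fin m) : ∑ k, S.Dm i k * S.P k p = S.P i p := by
  calc ∑ k, S.Dm i k * S.P k p = ∑ k, -(S.Dm i k * S.P p k) := by
        refine Finset.sum_congr rfl fun k _ => ?_
        rw [S.P_antisymm p k]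
        ring
    _ = -∑ k, S.Dm i k * S.P p k := Finset.sum_neg_distrib _
    _ = - S.P p i := by rw [S.G_lemma]
    _ = S.P i p := (S.P_antisymm i p).symm

lemma Dm_idem (i j : Fin m) : ∑ k, S.Dm i k * S.Dm k j = S.Dm i j := by
  calc ∑ k, S.Dm i k * S.Dm k j
      = ∑ k, ∑ t, S.γ2⁻¹ * (S.P j t * (S.Dm i k * S.P k t)) := by
        refine Finset.sum_congr rfl fun k _ => ?_
        rw [S.Dm_eq k j, Finset.mul_sum, Finset.mul_sum]
        exact Finset.sum_congr rfl fun t _ => by ring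
    _ = ∑ t, ∑ k, S.γ2⁻¹ * (S.P j t * (S.Dm i k * S.P k t)) := Finset.sum_comm
    _ = ∑ t, S.γ2⁻¹ * (S.P j t * S.P i t) := by
        refine Finset.sum_congr rfl fun t _ => ?_
        rw [← Finset.mul_sum, ← Finset.mul_sum, S.Dm_col]
    _ = S.Dm i j := by rw [← Finset.mul_sum, ← S.Dm_eq]

end AKP
end KPA
namespace KPA
namespace AKP

variable {m : ℕ} (S : AKP m)

/-- Two derivation-like maps on `A m` that agree on constants and on the
generators agree everywhere. -/
lemma derivation_ext (δ₁ δ₂ : A m → A m)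
    (add₁ : ∀ a b, δ₁ (a + b) = δ₁ a + δ₁ b)
    (mul₁ : ∀ a b, δ₁ (a * b) = δ₁ a * b + a * δ₁ b)
    (add₂ : ∀ a b, δ₂ (a + b) = δ₂ a + δ₂ b)
    (mul₂ : ∀ a b, δ₂ (a * b) = δ₂ a * b + a * δ₂ b)
    (hC₁ : ∀ z : ℂ, δ₁ (cC z) = 0) (hC₂ : ∀ z : ℂ, δ₂ (cC z) = 0)
    (hXg : ∀ j, δ₁ (Xg j) = δ₂ (Xg j)) : ∀ u, δ₁ u = δ₂ u := by
  have hpoly : ∀ p : MvPolynomial (Fin m) ℂ,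
      δ₁ (algebraMap (MvPolynomial (Fin m) ℂ) (A m) p)
        = δ₂ (algebraMap (MvPolynomial (Fin m) ℂ) (A m) p) := by
    intro p
    induction p using MvPolynomial.induction_on with
    | C z =>
        rw [show (algebraMap (MvPolynomial (Fin m) ℂ) (A m)) (MvPolynomial.C z)
            = cC z from rfl, hC₁, hC₂]
    | add p q hp hq => rw [RingHom.map_add, add₁, add₂, hp, hq]
    | mul_X p j hp =>
        rw [RingHom.map_mul, mul₁, mul₂, hp,
          show (algebraMap (MvPolynomial (Fin m) ℂ) (A m)) (MvPolynomial.X j)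
            = Xg j from rfl, hXg]
  intro u
  obtain ⟨⟨p, s⟩, h⟩ := IsLocalization.surj (nonZeroDivisors (MvPolynomial (Fin m) ℂ)) u
  simp only at h
  have hs : (algebraMap (MvPolynomial (Fin m) ℂ) (A m)) (s : MvPolynomial (Fin m) ℂ) ≠ 0 := by
    have hs0 : (s : MvPolynomial (Fin m) ℂ) ≠ 0 := nonZeroDivisors.ne_zero s.2
    exact fun hc => hs0 ((map_eq_zero_iff _ (IsFractionRing.injective _ _)).mp hc)
  have h1 := congrArg δ₁ h
  have h2 := congrArg δ₂ h
  rw [mul₁] at h1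
  rw [mul₂] at h2
  have hp' := hpoly p
  have hs' := hpoly (s : MvPolynomial (Fin m) ℂ)
  have : δ₁ u * (algebraMap (MvPolynomial (Fin m) ℂ) (A m)) (s : MvPolynomial (Fin m) ℂ)
      = δ₂ u * (algebraMap (MvPolynomial (Fin m) ℂ) (A m)) (s : MvPolynomial (Fin m) ℂ) := by
    linear_combination h1 - h2 + hp' - u * hs'
  exact mul_right_cancel₀ hs this

/-! ### Lemmas for `D` -/

lemma D_add (u v : A m) (i : Fin m) : S.D (u + v) i = S.D u i + S.D v i := by
  simp only [D, S.br_add_left]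
  rw [← mul_add, ← Finset.sum_add_distrib]
  congr 1
  exact Finset.sum_congr rfl fun k _ => by ring

lemma D_mul (u v : A m) (i : Fin m) : S.D (u * v) i = S.D u i * v + u * S.D v i := by
  simp only [D]
  simp only [S.br_leibniz_left]
  rw [show (∑ k, (S.br u (Xg k) * v + u * S.br v (Xg k)) * S.P i k)
      = (∑ k, S.br u (Xg k) * S.P i k) * v + u * ∑ k, S.br v (Xg k) * S.P i k by
    rw [Finset.sum_mul, Finset.mul_sum, ← Finset.sum_add_distrib]
    exact Finset.sum_congr rfl fun k _ => by ring]
  ring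

lemma D_cC (z : ℂ) (i : Fin m) : S.D (cC z) i = 0 := by
  simp only [D, S.br_const]
  simp

lemma D_zero (i : Fin m) : S.D 0 i = 0 := by
  have := S.D_add 0 0 i
  rw [add_zero] at this
  linear_combination -this

lemma D_neg (u : A m) (i : Fin m) : S.D (-u) i = - S.D u i := by
  have := S.D_add u (-u) i
  rw [add_neg_cancel, S.D_zero] at this
  linear_combination -this

lemma D_sub (u v : A m) (i : Fin m) : S.D (u - v) i = S.D u i - S.D v i := by
  rw [sub_eq_add_neg, S.D_add, S.D_neg, sub_eq_add_neg]

lemma D_Xg (k i : Fin m) : S.D (Xg k) i = S.Dm i k := rfl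

end AKP
end KPA
namespace KPA
namespace AKP

variable {m : ℕ} (S : AKP m)

/-- `∑ₚ D^{qp} {u, xᵖ} = {u, x^q}` for every `u` : the "gradient" of any element
is tangent. -/
lemma H1 (u : A m) (q : Fin m) :
    ∑ p, S.Dm q p * S.br u (Xg p) = S.br u (Xg q) := by
  refine derivation_ext (fun u => ∑ p, S.Dm q p * S.br u (Xg p))
    (fun u => S.br u (Xg q)) ?_ ?_ ?_ ?_ ?_ ?_ ?_ u
  · intro a b
    simp only [S.br_add_left]
    rw [← Finset.sum_add_distrib]
    exact Finset.sum_congr rfl fun p _ => by ring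
  · intro a b
    simp only [S.br_leibniz_left]
    rw [show (∑ p, S.Dm q p * (S.br a (Xg p) * b + a * S.br b (Xg p)))
        = (∑ p, S.Dm q p * S.br a (Xg p)) * b + a * ∑ p, S.Dm q p * S.br b (Xg p) by
      rw [Finset.sum_mul, Finset.mul_sum, ← Finset.sum_add_distrib]
      exact Finset.sum_congr rfl fun p _ => by ring]
  · intro a b; exact S.br_add_left a b (Xg q)
  · intro a b; exact S.br_leibniz_left a b (Xg q)
  · intro z; simp [S.br_const]
  · intro z; exact S.br_const z (Xg q)
  · intro j; exact S.G_lemma j q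

/-- `T` is fixed by the projection `D`. -/
def fixv (T : Fin m → A m) : Prop := ∀ i, ∑ k, S.Dm i k * T k = T i

lemma fixv_of_tang {T : Fin m → A m} (hT : S.tang T) : S.fixv T := by
  obtain ⟨V, hV⟩ := hT
  intro i
  calc ∑ k, S.Dm i k * T k = ∑ k, ∑ l, S.Dm i k * (S.Dm k l * V l) := by
        refine Finset.sum_congr rfl fun k _ => ?_
        rw [hV k, Finset.mul_sum]
    _ = ∑ l, ∑ k, S.Dm i k * (S.Dm k l * V l) := Finset.sum_comm
    _ = ∑ l, (∑ k, S.Dm i k * S.Dm k l) * V l := by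
        refine Finset.sum_congr rfl fun l _ => ?_
        rw [Finset.sum_mul]
        exact Finset.sum_congr rfl fun k _ => by ring
    _ = ∑ l, S.Dm i l * V l := by
        exact Finset.sum_congr rfl fun l _ => by rw [S.Dm_idem]
    _ = T i := (hV i).symm

/-! ### Lemmas for `act` -/

lemma act_add_u (X : Fin m → A m) (u v : A m) :
    S.act X (u + v) = S.act X u + S.act X v := by
  simp only [act, S.D_add]
  rw [← Finset.sum_add_distrib]
  exact Finset.sum_congr rfl fun i _ => by ring

lemma act_mul_u (X : Fin m → A m) (u v : A m) :
    S.act X (u * v) = S.act X u * v + u * S.act X v := by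
  simp only [act, S.D_mul]
  rw [Finset.sum_mul, Finset.mul_sum, ← Finset.sum_add_distrib]
  exact Finset.sum_congr rfl fun i _ => by ring

lemma act_cC (X : Fin m → A m) (z : ℂ) : S.act X (cC z) = 0 := by
  simp [act, S.D_cC]

lemma act_zero_u (X : Fin m → A m) : S.act X 0 = 0 := by
  simp [act, S.D_zero]

lemma act_sub_u (X : Fin m → A m) (u v : A m) :
    S.act X (u - v) = S.act X u - S.act X v := by
  simp only [act, S.D_sub]
  rw [← Finset.sum_sub_distrib]
  exact Finset.sum_congr rfl fun i _ => by ring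

lemma act_Xg {X : Fin m → A m} (hX : S.fixv X) (j : Fin m) :
    S.act X (Xg j) = X j := by
  calc S.act X (Xg j) = ∑ i, S.Dm j i * X i := by
        simp only [act, S.D_Xg]
        exact Finset.sum_congr rfl fun i _ => by rw [S.Dm_symm i j]; ring
    _ = X j := hX j

/-- The action of the hamiltonian vector field of `f` is `{f, ·}`. -/
lemma act_ham (f u : A m) : ∑ i, S.br f (Xg i) * S.D u i = S.br f u := by
  refine derivation_ext (fun u => ∑ i, S.br f (Xg i) * S.D u i)
    (fun u => S.br f u) ?_ ?_ ?_ ?_ ?_ ?_ ?_ u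
  · intro a b
    simp only [S.D_add]
    rw [← Finset.sum_add_distrib]
    exact Finset.sum_congr rfl fun i _ => by ring
  · intro a b
    simp only [S.D_mul]
    rw [Finset.sum_mul, Finset.mul_sum, ← Finset.sum_add_distrib]
    exact Finset.sum_congr rfl fun i _ => by ring
  · intro a b; exact S.br_add_right f a b
  · intro a b; exact S.br_leibniz f a b
  · intro z; simp [S.D_cC]
  · intro z; exact S.br_const_right f z
  · intro j
    calc ∑ i, S.br f (Xg i) * S.D (Xg j) i = ∑ i, S.Dm j i * S.br f (Xg i) := by
          refine Finset.sum_congr rfl fun i _ => ?_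
          rw [S.D_Xg, S.Dm_symm i j]; ring
      _ = S.br f (Xg j) := S.H1 f j

end AKP
end KPA
namespace KPA
namespace AKP

variable {m : ℕ} (S : AKP m)

/-! ### Hamiltonian decomposition of tangent vectors -/

/-- Coefficients expressing a tangent vector as a combination of hamiltonian
vector fields of the generators. -/
noncomputable def coef (X : Fin m → A m) (p : Fin m) : A m :=
  -(S.γ2⁻¹ * ∑ k, S.br (Xg k) (Xg p) * X k)

lemma coef_repr {X : Fin m → A m} (hX : S.fixv X) (i : Fin m) :
    X i = ∑ p, S.coef X p * S.br (Xg p) (Xg i) := by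
  have : ∑ p, S.coef X p * S.br (Xg p) (Xg i) = X i := by
    calc ∑ p, S.coef X p * S.br (Xg p) (Xg i)
        = ∑ p, ∑ k, S.γ2⁻¹ * (S.br (Xg k) (Xg p) * X k * S.br (Xg i) (Xg p)) := by
          refine Finset.sum_congr rfl fun p _ => ?_
          simp only [coef]
          rw [S.br_antisymm (Xg p) (Xg i),
            show -(S.γ2⁻¹ * ∑ k, S.br (Xg k) (Xg p) * X k) * -S.br (Xg i) (Xg p)
              = S.γ2⁻¹ * ((∑ k, S.br (Xg k) (Xg p) * X k) * S.br (Xg i) (Xg p))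
              from by ring,
            Finset.sum_mul, Finset.mul_sum]
      _ = ∑ k, ∑ p, S.γ2⁻¹ * (S.br (Xg k) (Xg p) * X k * S.br (Xg i) (Xg p)) :=
          Finset.sum_comm
      _ = ∑ k, S.Dm i k * X k := by
          refine Finset.sum_congr rfl fun k _ => ?_
          rw [show S.Dm i k = S.γ2⁻¹ * ∑ t, S.br (Xg k) (Xg t) * S.br (Xg i) (Xg t)
            from rfl]
          rw [mul_assoc, Finset.sum_mul, Finset.mul_sum]
          exact Finset.sum_congr rfl fun p _ => by ring
      _ = X i := hX i
  exact this.symm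

lemma act_coef {X : Fin m → A m} (hX : S.fixv X) (u : A m) :
    S.act X u = ∑ p, S.coef X p * S.br (Xg p) u := by
  calc S.act X u = ∑ i, (∑ p, S.coef X p * S.br (Xg p) (Xg i)) * S.D u i := by
        refine Finset.sum_congr rfl fun i _ => ?_
        rw [← S.coef_repr hX i]
    _ = ∑ i, ∑ p, S.coef X p * (S.br (Xg p) (Xg i) * S.D u i) := by
        refine Finset.sum_congr rfl fun i _ => ?_
        rw [Finset.sum_mul]
        exact Finset.sum_congr rfl fun p _ => by ring
    _ = ∑ p, ∑ i, S.coef X p * (S.br (Xg p) (Xg i) * S.D u i) := Finset.sum_comm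
    _ = ∑ p, S.coef X p * S.br (Xg p) u := by
        refine Finset.sum_congr rfl fun p _ => ?_
        rw [← Finset.mul_sum, S.act_ham]

/-! ### Closure properties of `fixv` -/

lemma fixv_ham (f : A m) : S.fixv (fun i => S.br f (Xg i)) := fun i => S.H1 f i

lemma fixv_smul (a : A m) {W : Fin m → A m} (hW : S.fixv W) :
    S.fixv (fun i => a * W i) := by
  intro i
  calc ∑ k, S.Dm i k * (a * W k) = a * ∑ k, S.Dm i k * W k := by
        rw [Finset.mul_sum]
        exact Finset.sum_congr rfl fun k _ => by ring
    _ = a * W i := by rw [hW i]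

lemma fixv_add {U W : Fin m → A m} (hU : S.fixv U) (hW : S.fixv W) :
    S.fixv (fun i => U i + W i) := by
  intro i
  rw [show (∑ k, S.Dm i k * (U k + W k))
      = (∑ k, S.Dm i k * U k) + ∑ k, S.Dm i k * W k by
    rw [← Finset.sum_add_distrib]
    exact Finset.sum_congr rfl fun k _ => by ring]
  rw [hU i, hW i]

lemma fixv_sub {U W : Fin m → A m} (hU : S.fixv U) (hW : S.fixv W) :
    S.fixv (fun i => U i - W i) := by
  intro i
  rw [show (∑ k, S.Dm i k * (U k - W k))
      = (∑ k, S.Dm i k * U k) - ∑ k, S.Dm i k * W k by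
    rw [← Finset.sum_sub_distrib]
    exact Finset.sum_congr rfl fun k _ => by ring]
  rw [hU i, hW i]

lemma fixv_dsum (W : Fin m → Fin m → Fin m → A m) (hW : ∀ p r, S.fixv (W p r)) :
    S.fixv (fun i => ∑ p, ∑ r, W p r i) := by
  intro i
  calc ∑ k, S.Dm i k * ∑ p, ∑ r, W p r k
      = ∑ k, ∑ p, ∑ r, S.Dm i k * W p r k := by
        refine Finset.sum_congr rfl fun k _ => ?_
        rw [Finset.mul_sum]
        exact Finset.sum_congr rfl fun p _ => Finset.mul_sum _ _ _
    _ = ∑ p, ∑ k, ∑ r, S.Dm i k * W p r k := Finset.sum_comm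
    _ = ∑ p, ∑ r, ∑ k, S.Dm i k * W p r k :=
        Finset.sum_congr rfl fun p _ => Finset.sum_comm
    _ = ∑ p, ∑ r, W p r i :=
        Finset.sum_congr rfl fun p _ => Finset.sum_congr rfl fun r _ => hW p r i

end AKP
end KPA
namespace KPA
namespace AKP

variable {m : ℕ} (S : AKP m)

lemma lie_formula {X Y : Fin m → A m} (hX : S.fixv X) (hY : S.fixv Y) (i : Fin m) :
    S.lie X Y i = ∑ p, ∑ r,
      (S.coef X p * S.br (Xg p) (S.coef Y r) * S.br (Xg r) (Xg i)
        - S.coef Y r * S.br (Xg r) (S.coef X p) * S.br (Xg p) (Xg i)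
        + S.coef X p * S.coef Y r * S.br (S.br (Xg p) (Xg r)) (Xg i)) := by
  have hbr1 : ∀ p, S.br (Xg p) (Y i) = ∑ r,
      (S.br (Xg p) (S.coef Y r) * S.br (Xg r) (Xg i)
        + S.coef Y r * S.br (Xg p) (S.br (Xg r) (Xg i))) := by
    intro p
    calc S.br (Xg p) (Y i)
        = S.br (Xg p) (∑ r, S.coef Y r * S.br (Xg r) (Xg i)) := by
          rw [← S.coef_repr hY i]
      _ = ∑ r, S.br (Xg p) (S.coef Y r * S.br (Xg r) (Xg i)) := S.br_sum_right _ _ _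
      _ = _ := Finset.sum_congr rfl fun r _ => S.br_leibniz _ _ _
  have hbr2 : ∀ r, S.br (Xg r) (X i) = ∑ p,
      (S.br (Xg r) (S.coef X p) * S.br (Xg p) (Xg i)
        + S.coef X p * S.br (Xg r) (S.br (Xg p) (Xg i))) := by
    intro r
    calc S.br (Xg r) (X i)
        = S.br (Xg r) (∑ p, S.coef X p * S.br (Xg p) (Xg i)) := by
          rw [← S.coef_repr hX i]
      _ = ∑ p, S.br (Xg r) (S.coef X p * S.br (Xg p) (Xg i)) := S.br_sum_right _ _ _
      _ = _ := Finset.sum_congr rfl fun p _ => S.br_leibniz _ _ _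
  have e1 : (∑ p, S.coef X p * S.br (Xg p) (Y i)) = ∑ p, ∑ r,
      S.coef X p * (S.br (Xg p) (S.coef Y r) * S.br (Xg r) (Xg i)
        + S.coef Y r * S.br (Xg p) (S.br (Xg r) (Xg i))) :=
    Finset.sum_congr rfl fun p _ => by rw [hbr1 p, Finset.mul_sum]
  have e2 : (∑ r, S.coef Y r * S.br (Xg r) (X i)) = ∑ p, ∑ r,
      S.coef Y r * (S.br (Xg r) (S.coef X p) * S.br (Xg p) (Xg i)
        + S.coef X p * S.br (Xg r) (S.br (Xg p) (Xg i))) :=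
    (Finset.sum_congr rfl fun r _ => by rw [hbr2 r, Finset.mul_sum]).trans
      Finset.sum_comm
  calc S.lie X Y i
      = (∑ p, S.coef X p * S.br (Xg p) (Y i))
          - ∑ r, S.coef Y r * S.br (Xg r) (X i) := by
        rw [show S.lie X Y i = S.act X (Y i) - S.act Y (X i) from rfl,
          S.act_coef hX, S.act_coef hY]
    _ = _ := by
        rw [e1, e2, ← Finset.sum_sub_distrib]
        refine Finset.sum_congr rfl fun p _ => ?_
        rw [← Finset.sum_sub_distrib]
        refine Finset.sum_congr rfl fun r _ => ?_
        linear_combination (S.coef X p * S.coef Y r) * S.br_jacobi' (Xg p) (Xg r) (Xg i)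

lemma lie_fix {X Y : Fin m → A m} (hX : S.fixv X) (hY : S.fixv Y) :
    S.fixv (S.lie X Y) := by
  have hfix : S.fixv (fun j => ∑ p, ∑ r,
      (S.coef X p * S.br (Xg p) (S.coef Y r) * S.br (Xg r) (Xg j)
        - S.coef Y r * S.br (Xg r) (S.coef X p) * S.br (Xg p) (Xg j)
        + S.coef X p * S.coef Y r * S.br (S.br (Xg p) (Xg r)) (Xg j))) := by
    refine S.fixv_dsum _ fun p r => ?_
    exact S.fixv_add
      (S.fixv_sub (S.fixv_smul _ (S.fixv_ham _)) (S.fixv_smul _ (S.fixv_ham _)))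
      (S.fixv_smul _ (S.fixv_ham _))
  intro i
  calc ∑ k, S.Dm i k * S.lie X Y k
      = ∑ k, S.Dm i k * ∑ p, ∑ r,
          (S.coef X p * S.br (Xg p) (S.coef Y r) * S.br (Xg r) (Xg k)
            - S.coef Y r * S.br (Xg r) (S.coef X p) * S.br (Xg p) (Xg k)
            + S.coef X p * S.coef Y r * S.br (S.br (Xg p) (Xg r)) (Xg k)) := by
        refine Finset.sum_congr rfl fun k _ => ?_
        rw [S.lie_formula hX hY k]
    _ = ∑ p, ∑ r,
          (S.coef X p * S.br (Xg p) (S.coef Y r) * S.br (Xg r) (Xg i)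
            - S.coef Y r * S.br (Xg r) (S.coef X p) * S.br (Xg p) (Xg i)
            + S.coef X p * S.coef Y r * S.br (S.br (Xg p) (Xg r)) (Xg i)) := hfix i
    _ = S.lie X Y i := (S.lie_formula hX hY i).symm

lemma act_lie {X Y : Fin m → A m} (hX : S.fixv X) (hY : S.fixv Y) (u : A m) :
    S.act (S.lie X Y) u = S.act X (S.act Y u) - S.act Y (S.act X u) := by
  refine derivation_ext (fun u => S.act (S.lie X Y) u)
    (fun u => S.act X (S.act Y u) - S.act Y (S.act X u)) ?_ ?_ ?_ ?_ ?_ ?_ ?_ u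
  · exact fun a b => S.act_add_u _ a b
  · exact fun a b => S.act_mul_u _ a b
  · intro a b; simp only [S.act_add_u]; ring
  · intro a b; simp only [S.act_mul_u, S.act_add_u]; ring
  · intro z; exact S.act_cC _ z
  · intro z; simp [S.act_cC, S.act_zero_u]
  · intro j
    show S.act (S.lie X Y) (Xg j) = S.act X (S.act Y (Xg j)) - S.act Y (S.act X (Xg j))
    rw [S.act_Xg (S.lie_fix hX hY) j, S.act_Xg hY j, S.act_Xg hX j]
    rfl

lemma lie_jacobi {X Y Z : Fin m → A m} (hX : S.fixv X) (hY : S.fixv Y)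
    (hZ : S.fixv Z) (i : Fin m) :
    S.lie X (S.lie Y Z) i + S.lie Y (S.lie Z X) i + S.lie Z (S.lie X Y) i = 0 := by
  have e1 : S.lie X (S.lie Y Z) i = S.act X (S.act Y (Z i)) - S.act X (S.act Z (Y i))
      - (S.act Y (S.act Z (X i)) - S.act Z (S.act Y (X i))) := by
    rw [show S.lie X (S.lie Y Z) i
        = S.act X (S.lie Y Z i) - S.act (S.lie Y Z) (X i) from rfl,
      show S.lie Y Z i = S.act Y (Z i) - S.act Z (Y i) from rfl,
      S.act_sub_u, S.act_lie hY hZ (X i)]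
  have e2 : S.lie Y (S.lie Z X) i = S.act Y (S.act Z (X i)) - S.act Y (S.act X (Z i))
      - (S.act Z (S.act X (Y i)) - S.act X (S.act Z (Y i))) := by
    rw [show S.lie Y (S.lie Z X) i
        = S.act Y (S.lie Z X i) - S.act (S.lie Z X) (Y i) from rfl,
      show S.lie Z X i = S.act Z (X i) - S.act X (Z i) from rfl,
      S.act_sub_u, S.act_lie hZ hX (Y i)]
  have e3 : S.lie Z (S.lie X Y) i = S.act Z (S.act X (Y i)) - S.act Z (S.act Y (X i))
      - (S.act X (S.act Y (Z i)) - S.act Y (S.act X (Z i))) := by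
    rw [show S.lie Z (S.lie X Y) i
        = S.act Z (S.lie X Y i) - S.act (S.lie X Y) (Z i) from rfl,
      show S.lie X Y i = S.act X (Y i) - S.act Y (X i) from rfl,
      S.act_sub_u, S.act_lie hX hY (Z i)]
  linear_combination e1 + e2 + e3

lemma torsion {X Y : Fin m → A m} (hX : S.fixv X) (hY : S.fixv Y) (i : Fin m) :
    S.nab X Y i - S.nab Y X i = S.lie X Y i := by
  calc S.nab X Y i - S.nab Y X i = ∑ k, S.Dm i k * S.lie X Y k := by
        rw [show S.nab X Y i = ∑ k, S.Dm i k * S.act X (Y k) from rfl,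
          show S.nab Y X i = ∑ k, S.Dm i k * S.act Y (X k) from rfl,
          ← Finset.sum_sub_distrib]
        refine Finset.sum_congr rfl fun k _ => ?_
        rw [show S.lie X Y k = S.act X (Y k) - S.act Y (X k) from rfl]
        ring
    _ = S.lie X Y i := S.lie_fix hX hY i

end AKP
end KPA
set_option maxHeartbeats 1000000

namespace KPA
namespace AKP

variable {m : ℕ} (S : AKP m)

/-! ### Linearity properties of `nab` and `curv` -/

lemma nab_sub_left (X X' Y : Fin m → A m) (i : Fin m) :
    S.nab (fun l => X l - X' l) Y i = S.nab X Y i - S.nab X' Y i := by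
  show (∑ k, S.Dm i k * ∑ l, (X l - X' l) * S.D (Y k) l) = _
  calc (∑ k, S.Dm i k * ∑ l, (X l - X' l) * S.D (Y k) l)
      = ∑ k, (S.Dm i k * ∑ l, X l * S.D (Y k) l
          - S.Dm i k * ∑ l, X' l * S.D (Y k) l) := by
        refine Finset.sum_congr rfl fun k _ => ?_
        rw [← mul_sub, ← Finset.sum_sub_distrib]
        congr 1
        exact Finset.sum_congr rfl fun l _ => by ring
    _ = S.nab X Y i - S.nab X' Y i := Finset.sum_sub_distrib _ _

lemma nab_neg_left (X Y : Fin m → A m) (i : Fin m) :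
    S.nab (fun l => -X l) Y i = - S.nab X Y i := by
  show (∑ k, S.Dm i k * ∑ l, (-X l) * S.D (Y k) l) = _
  calc (∑ k, S.Dm i k * ∑ l, (-X l) * S.D (Y k) l)
      = ∑ k, -(S.Dm i k * ∑ l, X l * S.D (Y k) l) := by
        refine Finset.sum_congr rfl fun k _ => ?_
        rw [show (∑ l, (-X l) * S.D (Y k) l) = -∑ l, X l * S.D (Y k) l from
          (Finset.sum_congr rfl fun l _ => by ring).trans (Finset.sum_neg_distrib _)]
        ring
    _ = - S.nab X Y i := Finset.sum_neg_distrib _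

lemma nab_zero_left (Y : Fin m → A m) (i : Fin m) :
    S.nab (fun _ => (0 : A m)) Y i = 0 := by
  show (∑ k, S.Dm i k * ∑ l, (0 : A m) * S.D (Y k) l) = 0
  simp

lemma nab_add3_left (W₁ W₂ W₃ Y : Fin m → A m) (i : Fin m) :
    S.nab (fun l => W₁ l + W₂ l + W₃ l) Y i
      = S.nab W₁ Y i + S.nab W₂ Y i + S.nab W₃ Y i := by
  have hin : ∀ k, (∑ l, (W₁ l + W₂ l + W₃ l) * S.D (Y k) l)
      = (∑ l, W₁ l * S.D (Y k) l) + (∑ l, W₂ l * S.D (Y k) l)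
        + ∑ l, W₃ l * S.D (Y k) l := by
    intro k
    calc (∑ l, (W₁ l + W₂ l + W₃ l) * S.D (Y k) l)
        = ∑ l, (W₁ l * S.D (Y k) l + W₂ l * S.D (Y k) l + W₃ l * S.D (Y k) l) :=
          Finset.sum_congr rfl fun l _ => by ring
      _ = _ := by rw [Finset.sum_add_distrib, Finset.sum_add_distrib]
  show (∑ k, S.Dm i k * ∑ l, (W₁ l + W₂ l + W₃ l) * S.D (Y k) l) = _
  calc (∑ k, S.Dm i k * ∑ l, (W₁ l + W₂ l + W₃ l) * S.D (Y k) l)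
      = ∑ k, (S.Dm i k * ∑ l, W₁ l * S.D (Y k) l
          + S.Dm i k * ∑ l, W₂ l * S.D (Y k) l
          + S.Dm i k * ∑ l, W₃ l * S.D (Y k) l) := by
        refine Finset.sum_congr rfl fun k _ => ?_
        rw [hin k]
        ring
    _ = S.nab W₁ Y i + S.nab W₂ Y i + S.nab W₃ Y i := by
        rw [Finset.sum_add_distrib, Finset.sum_add_distrib]
        rfl

lemma nab_sub_right (X U W : Fin m → A m) (i : Fin m) :
    S.nab X (fun k => U k - W k) i = S.nab X U i - S.nab X W i := by
  show (∑ k, S.Dm i k * ∑ l, X l * S.D (U k - W k) l) = _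
  calc (∑ k, S.Dm i k * ∑ l, X l * S.D (U k - W k) l)
      = ∑ k, (S.Dm i k * ∑ l, X l * S.D (U k) l
          - S.Dm i k * ∑ l, X l * S.D (W k) l) := by
        refine Finset.sum_congr rfl fun k _ => ?_
        rw [← mul_sub, ← Finset.sum_sub_distrib]
        congr 1
        refine Finset.sum_congr rfl fun l _ => ?_
        rw [S.D_sub]
        ring
    _ = S.nab X U i - S.nab X W i := Finset.sum_sub_distrib _ _

lemma act_sub_X (X X' : Fin m → A m) (u : A m) :
    S.act (fun l => X l - X' l) u = S.act X u - S.act X' u := by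
  show (∑ i, (X i - X' i) * S.D u i) = _
  calc (∑ i, (X i - X' i) * S.D u i)
      = ∑ i, (X i * S.D u i - X' i * S.D u i) :=
        Finset.sum_congr rfl fun i _ => by ring
    _ = _ := Finset.sum_sub_distrib _ _

lemma lie_sub_left (U U' Z : Fin m → A m) (k : Fin m) :
    S.lie (fun l => U l - U' l) Z k = S.lie U Z k - S.lie U' Z k := by
  show S.act (fun l => U l - U' l) (Z k) - S.act Z (U k - U' k)
      = (S.act U (Z k) - S.act Z (U k)) - (S.act U' (Z k) - S.act Z (U' k))
  rw [S.act_sub_u, S.act_sub_X]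
  ring

lemma curv_swap (X Y Z : Fin m → A m) (i : Fin m) :
    S.curv X Y Z i = - S.curv Y X Z i := by
  have hl : S.lie Y X = fun k => -S.lie X Y k := funext fun k => by
    show S.act Y (X k) - S.act X (Y k) = -(S.act X (Y k) - S.act Y (X k))
    ring
  have hn : S.nab (S.lie Y X) Z i = - S.nab (S.lie X Y) Z i := by
    rw [hl]; exact S.nab_neg_left _ _ _
  show S.nab X (S.nab Y Z) i - S.nab Y (S.nab X Z) i - S.nab (S.lie X Y) Z i
      = -(S.nab Y (S.nab X Z) i - S.nab X (S.nab Y Z) i - S.nab (S.lie Y X) Z i)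
  linear_combination -hn

lemma curv_sub_left (U U' Z V : Fin m → A m) (i : Fin m) :
    S.curv (fun k => U k - U' k) Z V i = S.curv U Z V i - S.curv U' Z V i := by
  have h1 : S.nab (fun k => U k - U' k) (S.nab Z V) i
      = S.nab U (S.nab Z V) i - S.nab U' (S.nab Z V) i := S.nab_sub_left _ _ _ _
  have h2 : S.nab (fun k => U k - U' k) V = fun k => S.nab U V k - S.nab U' V k :=
    funext fun k => S.nab_sub_left _ _ _ _
  have h3 : S.nab Z (S.nab (fun k => U k - U' k) V) i
      = S.nab Z (S.nab U V) i - S.nab Z (S.nab U' V) i := by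
    rw [h2]; exact S.nab_sub_right _ _ _ _
  have h4 : S.lie (fun k => U k - U' k) Z = fun k => S.lie U Z k - S.lie U' Z k :=
    funext fun k => S.lie_sub_left _ _ _ _
  have h5 : S.nab (S.lie (fun k => U k - U' k) Z) V i
      = S.nab (S.lie U Z) V i - S.nab (S.lie U' Z) V i := by
    rw [h4]; exact S.nab_sub_left _ _ _ _
  show S.nab (fun k => U k - U' k) (S.nab Z V) i
      - S.nab Z (S.nab (fun k => U k - U' k) V) i
      - S.nab (S.lie (fun k => U k - U' k) Z) V i
      = (S.nab U (S.nab Z V) i - S.nab Z (S.nab U V) i - S.nab (S.lie U Z) V i)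
        - (S.nab U' (S.nab Z V) i - S.nab Z (S.nab U' V) i
            - S.nab (S.lie U' Z) V i)
  linear_combination h1 - h3 - h5

lemma nab_curv_expand (X Y Z V : Fin m → A m) (i : Fin m) :
    S.nab X (S.curv Y Z V) i = S.nab X (S.nab Y (S.nab Z V)) i
      - S.nab X (S.nab Z (S.nab Y V)) i - S.nab X (S.nab (S.lie Y Z) V) i := by
  have h1 : S.curv Y Z V = fun k =>
      (S.nab Y (S.nab Z V) k - S.nab Z (S.nab Y V) k) - S.nab (S.lie Y Z) V k := rfl
  have e1 : S.nab X (fun k => (S.nab Y (S.nab Z V) k - S.nab Z (S.nab Y V) k)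
        - S.nab (S.lie Y Z) V k) i
      = S.nab X (fun k => S.nab Y (S.nab Z V) k - S.nab Z (S.nab Y V) k) i
        - S.nab X (S.nab (S.lie Y Z) V) i :=
    S.nab_sub_right X (fun k => S.nab Y (S.nab Z V) k - S.nab Z (S.nab Y V) k)
      (S.nab (S.lie Y Z) V) i
  have e2 : S.nab X (fun k => S.nab Y (S.nab Z V) k - S.nab Z (S.nab Y V) k) i
      = S.nab X (S.nab Y (S.nab Z V)) i - S.nab X (S.nab Z (S.nab Y V)) i :=
    S.nab_sub_right X (S.nab Y (S.nab Z V)) (S.nab Z (S.nab Y V)) i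
  rw [h1, e1, e2]

end AKP
end KPA
namespace KPA
namespace AKP

variable {m : ℕ} (S : AKP m)

lemma nabR_expand (X Y Z V : Fin m → A m) (i : Fin m) :
    S.nabR X Y Z V i
      = S.nab X (S.nab Y (S.nab Z V)) i - S.nab X (S.nab Z (S.nab Y V)) i
        - S.nab Y (S.nab Z (S.nab X V)) i + S.nab Z (S.nab Y (S.nab X V)) i
        - S.curv (S.nab X Y) Z V i - S.curv Y (S.nab X Z) V i
        - S.curv X (S.lie Y Z) V i - S.nab (S.lie X (S.lie Y Z)) V i := by
  have h2 : S.curv Y Z (S.nab X V) i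
      = S.nab Y (S.nab Z (S.nab X V)) i - S.nab Z (S.nab Y (S.nab X V)) i
        - S.nab (S.lie Y Z) (S.nab X V) i := rfl
  have h3 : S.curv X (S.lie Y Z) V i
      = S.nab X (S.nab (S.lie Y Z) V) i - S.nab (S.lie Y Z) (S.nab X V) i
        - S.nab (S.lie X (S.lie Y Z)) V i := rfl
  have h4 := S.nab_curv_expand X Y Z V i
  show S.nab X (S.curv Y Z V) i - S.curv (S.nab X Y) Z V i
      - S.curv Y (S.nab X Z) V i - S.curv Y Z (S.nab X V) i = _
  linear_combination h4 - h2 + h3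

lemma curv_pair {X Y : Fin m → A m} (hX : S.fixv X) (hY : S.fixv Y)
    (Z V : Fin m → A m) (i : Fin m) :
    S.curv (S.nab X Y) Z V i - S.curv (S.nab Y X) Z V i
      = S.curv (S.lie X Y) Z V i := by
  have h := S.curv_sub_left (S.nab X Y) (S.nab Y X) Z V i
  have hfun : (fun k => S.nab X Y k - S.nab Y X k) = S.lie X Y :=
    funext fun k => S.torsion hX hY k
  rw [hfun] at h
  linear_combination -h

lemma nab_lie3 {X Y Z : Fin m → A m} (hX : S.fixv X) (hY : S.fixv Y)
    (hZ : S.fixv Z) (V : Fin m → A m) (i : Fin m) :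
    S.nab (S.lie X (S.lie Y Z)) V i + S.nab (S.lie Y (S.lie Z X)) V i
      + S.nab (S.lie Z (S.lie X Y)) V i = 0 := by
  have hfun : (fun k => S.lie X (S.lie Y Z) k + S.lie Y (S.lie Z X) k
      + S.lie Z (S.lie X Y) k) = fun _ => (0 : A m) :=
    funext fun k => S.lie_jacobi hX hY hZ k
  calc S.nab (S.lie X (S.lie Y Z)) V i + S.nab (S.lie Y (S.lie Z X)) V i
      + S.nab (S.lie Z (S.lie X Y)) V i
      = S.nab (fun k => S.lie X (S.lie Y Z) k + S.lie Y (S.lie Z X) k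
          + S.lie Z (S.lie X Y) k) V i := (S.nab_add3_left _ _ _ _ _).symm
    _ = S.nab (fun _ => (0 : A m)) V i := by rw [hfun]
    _ = 0 := S.nab_zero_left _ _

lemma bianchi1 {X Y Z : Fin m → A m} (hX : S.fixv X) (hY : S.fixv Y)
    (hZ : S.fixv Z) (i : Fin m) :
    S.curv X Y Z i + S.curv Z X Y i + S.curv Y Z X i = 0 := by
  have e1 : S.nab X (S.lie Y Z) i = S.nab X (S.nab Y Z) i - S.nab X (S.nab Z Y) i := by
    have hfun : S.lie Y Z = fun k => S.nab Y Z k - S.nab Z Y k :=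
      funext fun k => (S.torsion hY hZ k).symm
    rw [hfun]
    exact S.nab_sub_right _ _ _ _
  have e1' : S.nab Y (S.lie Z X) i = S.nab Y (S.nab Z X) i - S.nab Y (S.nab X Z) i := by
    have hfun : S.lie Z X = fun k => S.nab Z X k - S.nab X Z k :=
      funext fun k => (S.torsion hZ hX k).symm
    rw [hfun]
    exact S.nab_sub_right _ _ _ _
  have e1'' : S.nab Z (S.lie X Y) i = S.nab Z (S.nab X Y) i - S.nab Z (S.nab Y X) i := by
    have hfun : S.lie X Y = fun k => S.nab X Y k - S.nab Y X k :=
      funext fun k => (S.torsion hX hY k).symm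
    rw [hfun]
    exact S.nab_sub_right _ _ _ _
  have e2 : S.nab X (S.lie Y Z) i - S.nab (S.lie Y Z) X i = S.lie X (S.lie Y Z) i :=
    S.torsion hX (S.lie_fix hY hZ) i
  have e2' : S.nab Y (S.lie Z X) i - S.nab (S.lie Z X) Y i = S.lie Y (S.lie Z X) i :=
    S.torsion hY (S.lie_fix hZ hX) i
  have e2'' : S.nab Z (S.lie X Y) i - S.nab (S.lie X Y) Z i = S.lie Z (S.lie X Y) i :=
    S.torsion hZ (S.lie_fix hX hY) i
  have e3 := S.lie_jacobi hX hY hZ i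
  show (S.nab X (S.nab Y Z) i - S.nab Y (S.nab X Z) i - S.nab (S.lie X Y) Z i)
      + (S.nab Z (S.nab X Y) i - S.nab X (S.nab Z Y) i - S.nab (S.lie Z X) Y i)
      + (S.nab Y (S.nab Z X) i - S.nab Z (S.nab Y X) i - S.nab (S.lie Y Z) X i) = 0
  linear_combination e2 + e2' + e2'' + e3 - e1 - e1' - e1''

lemma bianchi2 {X Y Z : Fin m → A m} (hX : S.fixv X) (hY : S.fixv Y)
    (hZ : S.fixv Z) (V : Fin m → A m) (i : Fin m) :
    S.nabR X Y Z V i + S.nabR Y Z X V i + S.nabR Z X Y V i = 0 := by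
  have E1 := S.nabR_expand X Y Z V i
  have E2 := S.nabR_expand Y Z X V i
  have E3 := S.nabR_expand Z X Y V i
  have t1 := S.curv_pair hX hY Z V i
  have t2 := S.curv_pair hY hZ X V i
  have t3 := S.curv_pair hZ hX Y V i
  have sw1 : S.curv Y (S.nab X Z) V i = - S.curv (S.nab X Z) Y V i :=
    S.curv_swap _ _ _ _
  have sw2 : S.curv Z (S.nab Y X) V i = - S.curv (S.nab Y X) Z V i :=
    S.curv_swap _ _ _ _
  have sw3 : S.curv X (S.nab Z Y) V i = - S.curv (S.nab Z Y) X V i :=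
    S.curv_swap _ _ _ _
  have s1 : S.curv X (S.lie Y Z) V i = - S.curv (S.lie Y Z) X V i :=
    S.curv_swap _ _ _ _
  have s2 : S.curv Y (S.lie Z X) V i = - S.curv (S.lie Z X) Y V i :=
    S.curv_swap _ _ _ _
  have s3 : S.curv Z (S.lie X Y) V i = - S.curv (S.lie X Y) Z V i :=
    S.curv_swap _ _ _ _
  have j := S.nab_lie3 hX hY hZ V i
  linear_combination E1 + E2 + E3 - sw1 - sw2 - sw3 - s1 - s2 - s3 - t1 - t2 - t3 - j

end AKP
end KPA

/-- The Bianchi identities for the curvature of an almost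
Kähler–Poisson algebra: `R(X,Y,Z) + R(Z,X,Y) + R(Y,Z,X) = 0` and
`(∇_X R)(Y,Z,V) + (∇_Y R)(Z,X,V) + (∇_Z R)(X,Y,V) = 0`. -/
theorem statement_15 {m : ℕ} (S : KPA.AKP m) (X Y Z V : Fin m → KPA.A m)
    (hX : S.tang X) (hY : S.tang Y) (hZ : S.tang Z) (hV : S.tang V) :
    (∀ i, S.curv X Y Z i + S.curv Z X Y i + S.curv Y Z X i = 0) ∧
    (∀ i, S.nabR X Y Z V i + S.nabR Y Z X V i + S.nabR Z X Y V i = 0) := by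
  have hX' := S.fixv_of_tang hX
  have hY' := S.fixv_of_tang hY
  have hZ' := S.fixv_of_tang hZ
  exact ⟨fun i => S.bianchi1 hX' hY' hZ' i, fun i => S.bianchi2 hX' hY' hZ' V i⟩
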